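/- The minimum wirelength of embedding the hypercube Q^6 into the torus C_8 × C_8 is 320. -/

import Mathlib

/-- The hypercube graph `Q^d` on `{0,1}^d`: two strings are adjacent iff they differ
in exactly one coordinate. -/
def Q (d : ℕ) : SimpleGraph (Fin d → Bool) where
  Adj x y := hammingDist x y = 1
  symm := ⟨by intro x y h; rwa [hammingDist_comm]⟩
  loopless := ⟨by intro x h; simp [hammingDist_self] at h⟩

/-- The path graph `P_n` on vertices `0, …, n-1`. -/
def pathGraph (n : ℕ) : SimpleGraph (Fin n) where
  Adj i j := i.val + 1 = j.val ∨ j.val + 1 = i.val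
  symm := ⟨fun _ _ h => h.symm⟩
  loopless := ⟨fun _ h => by cases h <;> omega⟩

/-- The cycle graph `C_n` on vertices `0, …, n-1` (with wraparound edge). -/
def cycleGraph (n : ℕ) : SimpleGraph (Fin n) where
  Adj i j := i ≠ j ∧ ((i.val + 1) % n = j.val ∨ (j.val + 1) % n = i.val)
  symm := ⟨fun _ _ h => ⟨h.1.symm, h.2.symm⟩⟩
  loopless := ⟨fun _ h => h.1 rfl⟩

/-- An embedding of `G` into `H`: a vertex bijection together with a path in `H`
assigned to each edge of `G`. -/
structure Embed {α β : Type*} (G : SimpleGraph α) (H : SimpleGraph β) where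
  toEquiv : α ≃ β
  path : ∀ u v, G.Adj u v → H.Walk (toEquiv u) (toEquiv v)
  isPath : ∀ u v (h : G.Adj u v), (path u v h).IsPath
  symmPath : ∀ u v (h : G.Adj u v), path v u h.symm = (path u v h).reverse

open Classical in
/-- The length of the path assigned by `f` to an edge of `G`. -/
noncomputable def pathLen {α β : Type*} {G : SimpleGraph α} {H : SimpleGraph β}
    (f : Embed G H) : Sym2 α → ℕ :=
  Sym2.lift ⟨fun u v => if h : G.Adj u v then (f.path u v h).length else 0, by
    intro u v
    dsimp only
    by_cases h : G.Adj u v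
    · rw [dif_pos h, dif_pos h.symm, f.symmPath u v h, SimpleGraph.Walk.length_reverse]
    · rw [dif_neg h, dif_neg (fun h' => h h'.symm)]⟩

/-- `pathUses f e e'` : the path assigned by `f` to the `G`-edge `e'` uses the `H`-edge `e`. -/
def pathUses {α β : Type*} {G : SimpleGraph α} {H : SimpleGraph β}
    (f : Embed G H) (e : Sym2 β) : Sym2 α → Prop :=
  Sym2.lift ⟨fun u v => ∃ h : G.Adj u v, e ∈ (f.path u v h).edges, by
    intro u v
    dsimp only
    apply propext
    have key : ∀ (a b : α) (h : G.Adj a b) (h' : G.Adj b a),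
        (f.path b a h').edges = ((f.path a b h).edges).reverse := by
      intro a b h h'
      rw [Subsingleton.elim h' h.symm, f.symmPath a b h, SimpleGraph.Walk.edges_reverse]
    constructor
    · rintro ⟨h, he⟩
      exact ⟨h.symm, by rw [key u v h h.symm, List.mem_reverse]; exact he⟩
    · rintro ⟨h, he⟩
      refine ⟨h.symm, ?_⟩
      rw [key v u h h.symm, List.mem_reverse]
      exact he⟩

/-- The congestion `EC_f(e)` of an `H`-edge `e`: the number of edges of `G` whose
assigned path uses `e`. -/
noncomputable def EC {α β : Type*} {G : SimpleGraph α} {H : SimpleGraph β}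
    (f : Embed G H) (e : Sym2 β) : ℕ :=
  {e' : Sym2 α | e' ∈ G.edgeSet ∧ pathUses f e e'}.ncard

/-- The congestion `EC_f(S)` of a set `S` of `H`-edges. -/
noncomputable def ECS {α β : Type*} {G : SimpleGraph α} {H : SimpleGraph β}
    (f : Embed G H) (S : Finset (Sym2 β)) : ℕ :=
  ∑ e ∈ S, EC f e

/-- The wirelength of an embedding: the total length of the assigned paths over all
edges of `G`. -/
noncomputable def wirelength {α β : Type*} {G : SimpleGraph α} {H : SimpleGraph β}
    (f : Embed G H) : ℕ :=
  ∑ᶠ e ∈ G.edgeSet, pathLen f e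

/-- The minimum wirelength over all embeddings of `G` into `H`. -/
noncomputable def minWL {α β : Type*} (G : SimpleGraph α) (H : SimpleGraph β) : ℕ :=
  sInf {n | ∃ f : Embed G H, wirelength f = n}

set_option maxRecDepth 100000

-- ===================== basic instances =====================

instance instQDec : DecidableRel (Q 6).Adj := fun u v =>
  inferInstanceAs (Decidable (hammingDist u v = 1))

instance instCyc8Dec : DecidableRel (cycleGraph 8).Adj := fun i j =>
  inferInstanceAs (Decidable (i ≠ j ∧ ((i.val + 1) % 8 = j.val ∨ (j.val + 1) % 8 = i.val)))

abbrev Ht := (cycleGraph 8).boxProd (cycleGraph 8)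

instance instHtDec : DecidableRel Ht.Adj := fun p q =>
  inferInstanceAs (Decidable (((cycleGraph 8).Adj p.1 q.1 ∧ p.2 = q.2) ∨
    ((cycleGraph 8).Adj p.2 q.2 ∧ p.1 = q.1)))

-- ===================== generic sum lemmas =====================

lemma unsum {α : Type*} [Fintype α] [DecidableEq α] (T : Finset α) (g : α → ℕ) :
    ∑ u ∈ T, g u = ∑ u, if u ∈ T then g u else 0 := by
  rw [Finset.sum_ite_mem, Finset.univ_inter]

theorem pair_sum {α : Type*} [Fintype α] [DecidableEq α] (G : SimpleGraph α) [DecidableRel G.Adj]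
    [Fintype G.edgeSet] (F : Sym2 α → ℕ) :
    (∑ u, ∑ v, if G.Adj u v then F (Sym2.mk u v) else 0) = 2 * ∑ e ∈ G.edgeFinset, F e := by
  have h1 : (∑ u, ∑ v, if G.Adj u v then F (Sym2.mk u v) else 0)
      = ∑ d : G.Dart, F d.edge := by
    rw [show (∑ u, ∑ v, if G.Adj u v then F (Sym2.mk u v) else 0)
        = ∑ p : α × α, (if G.Adj p.1 p.2 then F (Sym2.mk p.1 p.2) else 0) from
        (Fintype.sum_prod_type (f := fun p : α × α => if G.Adj p.1 p.2 then F (Sym2.mk p.1 p.2) else 0)).symm,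
      ← Finset.sum_filter]
    refine (Finset.sum_bij (fun (d : G.Dart) _ => d.toProd) ?_ ?_ ?_ ?_).symm
    · intro d _; simp [d.adj]
    · intro d1 _ d2 _ h; exact SimpleGraph.Dart.ext _ _ h
    · intro p hp; exact ⟨⟨p, (Finset.mem_filter.1 hp).2⟩, Finset.mem_univ _, rfl⟩
    · intro d _; rfl
  have h2 : ∑ e ∈ G.edgeFinset, ∑ d ∈ Finset.univ.filter (fun d : G.Dart => d.edge = e), F d.edge
      = ∑ d : G.Dart, F d.edge :=
    Finset.sum_fiberwise_of_maps_to (fun d _ => SimpleGraph.mem_edgeFinset.2 d.edge_mem) _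
  rw [h1, ← h2, Finset.mul_sum]
  refine Finset.sum_congr rfl fun e he => ?_
  have hfib : ∀ d : G.Dart, d ∈ Finset.univ.filter (fun d => d.edge = e) → F d.edge = F e := by
    intro d hd; rw [(Finset.mem_filter.1 hd).2]
  rw [Finset.sum_congr rfl hfib, Finset.sum_const, smul_eq_mul]
  have := G.dart_edge_fiber_card e (SimpleGraph.mem_edgeFinset.1 he)
  rw [show ({d : G.Dart | d.edge = e} : Finset _) = Finset.univ.filter (fun d => d.edge = e) from rfl] at this
  rw [this]

lemma wirelength_eq_sum {α β : Type*} [Fintype α] {G : SimpleGraph α} {H : SimpleGraph β}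
    [Fintype G.edgeSet] (f : Embed G H) :
    wirelength f = ∑ e ∈ G.edgeFinset, pathLen f e := by
  rw [wirelength, ← SimpleGraph.coe_edgeFinset, finsum_mem_coe_finset]

lemma pathLen_eq {α β : Type*} {G : SimpleGraph α} {H : SimpleGraph β}
    (f : Embed G H) {u v : α} (h : G.Adj u v) :
    pathLen f (Sym2.mk u v) = (f.path u v h).length := by
  rw [pathLen, Sym2.lift_mk]
  exact dif_pos h

-- ===================== isoperimetric inequality in Q6 =====================

def gtbl : ℕ → List ℕ
  | 0 => [0, 0]
  | 1 => [0, 0, 2]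
  | 2 => [0, 0, 2, 4, 8]
  | 3 => [0, 0, 2, 4, 8, 10, 14, 18, 24]
  | 4 => [0, 0, 2, 4, 8, 10, 14, 18, 24, 26, 30, 34, 40, 44, 50, 56, 64]
  | 5 => [0, 0, 2, 4, 8, 10, 14, 18, 24, 26, 30, 34, 40, 44, 50, 56, 64, 66, 70, 74,
          80, 84, 90, 96, 104, 108, 114, 120, 128, 134, 142, 150, 160]
  | 6 => [0, 0, 2, 4, 8, 10, 14, 18, 24, 26, 30, 34, 40, 44, 50, 56, 64, 66, 70, 74,
          80, 84, 90, 96, 104, 108, 114, 120, 128, 134, 142, 150, 160, 162, 166, 170,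
          176, 180, 186, 192, 200, 204, 210, 216, 224, 230, 238, 246, 256, 260, 266,
          272, 280, 286, 294, 302, 312, 318, 326, 334, 344, 352, 362, 372, 384]
  | _ => []

def Gt (n m : ℕ) : ℕ := (gtbl n).getD m 0

lemma Gt_step : ∀ n < 6, ∀ a ≤ 2^n, ∀ b ≤ 2^n,
    Gt n a + Gt n b + 2 * min a b ≤ Gt (n+1) (a + b) := by decide

lemma ham_eq_sum {n : ℕ} (x y : Fin n → Bool) :
    hammingDist x y = ∑ i, if x i = y i then 0 else 1 := by
  rw [hammingDist, Finset.card_filter]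
  congr 1; funext i
  by_cases h : x i = y i <;> simp [h]

lemma ham_cons {n : ℕ} (a b : Bool) (w w' : Fin n → Bool) :
    hammingDist (Fin.cons a w : Fin (n+1) → Bool) (Fin.cons b w' : Fin (n+1) → Bool)
      = (if a = b then 0 else 1) + hammingDist w w' := by
  rw [ham_eq_sum (Fin.cons a w) (Fin.cons b w'), ham_eq_sum w w', Fin.sum_univ_succ]
  simp [Fin.cons_zero, Fin.cons_succ]

def consEq (n : ℕ) : Bool × (Fin n → Bool) ≃ (Fin (n+1) → Bool) where
  toFun p := Fin.cons p.1 p.2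
  invFun x := (x 0, Fin.tail x)
  left_inv p := by simp
  right_inv x := Fin.cons_self_tail x

@[simp] lemma consEq_apply {n : ℕ} (p : Bool × (Fin n → Bool)) :
    consEq n p = (Fin.cons p.1 p.2 : Fin (n+1) → Bool) := rfl

theorem swap2 {n : ℕ} (S : Finset (Fin (n+1) → Bool))
    (f : (Fin (n+1) → Bool) → (Fin (n+1) → Bool) → ℕ) :
    (∑ u ∈ S, ∑ v ∈ S, f u v)
    = ∑ p : Bool × (Fin n → Bool), ∑ q : Bool × (Fin n → Bool),
      if consEq n p ∈ S then (if consEq n q ∈ S then f (consEq n p) (consEq n q) else 0) else 0 := by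
  have h1 : ∀ (g : (Fin (n+1) → Bool) → ℕ), (∑ u ∈ S, g u)
      = ∑ p : Bool × (Fin n → Bool), if consEq n p ∈ S then g (consEq n p) else 0 := by
    intro g
    rw [unsum S g]
    exact (Equiv.sum_comp (consEq n) _).symm
  rw [h1 (fun u => ∑ v ∈ S, f u v)]
  refine Finset.sum_congr rfl fun p _ => ?_
  by_cases h : consEq n p ∈ S
  · rw [if_pos h, h1 (fun v => f (consEq n p) v)]
    exact Finset.sum_congr rfl fun q _ => by rw [if_pos h]
  · simp only [consEq_apply] at h ⊢
    simp [h]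

lemma iteswap (P Q : Prop) [Decidable P] [Decidable Q] (x : ℕ) :
    (if P then (if Q then x else 0) else 0) = (if Q then (if P then x else 0) else 0) := by
  split_ifs <;> rfl

lemma innerEval {n : ℕ} (P : (Fin n → Bool) → Prop) [DecidablePred P] (w : Fin n → Bool) :
    (∑ w' : Fin n → Bool, if P w' then (if w = w' then (1:ℕ) else 0) else 0)
      = if P w then 1 else 0 := by
  rw [Finset.sum_congr rfl fun w' _ => iteswap (P w') (w = w') 1]
  rw [Finset.sum_ite_eq]
  simp

def Pcnt {n : ℕ} (S : Finset (Fin n → Bool)) : ℕ :=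
  ∑ u ∈ S, ∑ v ∈ S, if hammingDist u v = 1 then 1 else 0

theorem hsplit {n : ℕ} (S : Finset (Fin (n+1) → Bool))
    (Sb : Bool → Finset (Fin n → Bool))
    (hSb : ∀ b, Sb b = Finset.univ.filter (fun w => (Fin.cons b w : Fin (n+1) → Bool) ∈ S)) :
    Pcnt S = Pcnt (Sb false) + Pcnt (Sb true) + 2 * ((Sb false) ∩ (Sb true)).card := by
  classical
  have memSb : ∀ b w, w ∈ Sb b ↔ (Fin.cons b w : Fin (n+1) → Bool) ∈ S := by
    intro b w; rw [hSb]; simp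
  set A : Bool → Bool → ℕ := fun b b' => ∑ w : Fin n → Bool, ∑ w' : Fin n → Bool,
    if (Fin.cons b w : Fin (n+1) → Bool) ∈ S then
      (if (Fin.cons b' w' : Fin (n+1) → Bool) ∈ S then
        (if hammingDist (Fin.cons b w : Fin (n+1) → Bool) (Fin.cons b' w' : Fin (n+1) → Bool) = 1
          then 1 else 0) else 0) else 0 with hA
  have step1 : Pcnt S = (A true true + A true false) + (A false true + A false false) := by
    rw [Pcnt, swap2 S]
    simp only [Fintype.sum_prod_type, Fintype.sum_bool, consEq_apply]
    rw [Finset.sum_add_distrib, Finset.sum_add_distrib]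
    rfl
  have hsame : ∀ b, A b b = Pcnt (Sb b) := by
    intro b
    rw [hA, Pcnt, unsum (Sb b) (fun u => ∑ v ∈ Sb b, if hammingDist u v = 1 then 1 else 0)]
    refine Finset.sum_congr rfl fun w _ => ?_
    by_cases h : (Fin.cons b w : Fin (n+1) → Bool) ∈ S
    · rw [if_pos ((memSb b w).2 h), Finset.sum_congr rfl fun w' _ => if_pos h,
        unsum (Sb b) (fun v => if hammingDist w v = 1 then 1 else 0)]
      refine Finset.sum_congr rfl fun w' _ => ?_
      simp [memSb, ham_cons]
    · have h' : w ∉ Sb b := fun hw => h ((memSb b w).1 hw)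
      rw [if_neg h', Finset.sum_congr rfl fun w' _ => if_neg h]
      simp
  have hIcard : ((Sb false) ∩ (Sb true)).card = ∑ w : Fin n → Bool,
      if (Fin.cons false w : Fin (n+1) → Bool) ∈ S then
        (if (Fin.cons true w : Fin (n+1) → Bool) ∈ S then (1:ℕ) else 0) else 0 := by
    rw [← Finset.filter_univ_mem ((Sb false) ∩ (Sb true)), Finset.card_filter]
    refine Finset.sum_congr rfl fun w _ => ?_
    simp only [Finset.mem_inter, memSb, ite_and]
  have h11 : ∀ m : ℕ, (1 + m = 1) = (m = 0) := fun m => propext ⟨fun h => by omega, fun h => by omega⟩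
  have hdiff : ∀ b : Bool, A b (!b) = ((Sb false) ∩ (Sb true)).card := by
    intro b
    have hne : (b = !b) = False := by cases b <;> simp
    simp only [hA]
    have hw : ∀ w : Fin n → Bool, (∑ w' : Fin n → Bool,
        if (Fin.cons b w : Fin (n+1) → Bool) ∈ S then
          (if (Fin.cons (!b) w' : Fin (n+1) → Bool) ∈ S then
            (if hammingDist (Fin.cons b w : Fin (n+1) → Bool) (Fin.cons (!b) w' : Fin (n+1) → Bool) = 1
              then 1 else 0) else 0) else 0)
        = (if (Fin.cons b w : Fin (n+1) → Bool) ∈ S then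
            (if (Fin.cons (!b) w : Fin (n+1) → Bool) ∈ S then (1:ℕ) else 0) else 0) := by
      intro w
      by_cases h : (Fin.cons b w : Fin (n+1) → Bool) ∈ S
      · rw [if_pos h, Finset.sum_congr rfl fun w' _ => if_pos h]
        simp only [ham_cons, hne, if_false, h11, hammingDist_eq_zero]
        exact innerEval (fun w' => (Fin.cons (!b) w' : Fin (n+1) → Bool) ∈ S) w
      · rw [if_neg h, Finset.sum_congr rfl fun w' _ => if_neg h]
        simp
    rw [Finset.sum_congr rfl fun w _ => hw w, hIcard]
    cases b
    · simp
    · exact Finset.sum_congr rfl fun w _ => iteswap _ _ 1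
  rw [step1, hsame, hsame]
  have d1 := hdiff true
  have d2 := hdiff false
  simp only [Bool.not_true, Bool.not_false] at d1 d2
  rw [d1, d2]
  omega

lemma isop : ∀ (n : ℕ), n ≤ 6 → ∀ S : Finset (Fin n → Bool), Pcnt S ≤ Gt n S.card := by
  intro n
  induction n with
  | zero =>
    intro _ S
    have h0 : Pcnt S = 0 := by
      refine Finset.sum_eq_zero fun u _ => Finset.sum_eq_zero fun v _ => ?_
      have : hammingDist u v = 0 := by simp [hammingDist]
      simp [this]
    rw [h0]; exact Nat.zero_le _
  | succ n ih =>
    intro h6 S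
    classical
    set Sb : Bool → Finset (Fin n → Bool) :=
      fun b => Finset.univ.filter (fun w => (Fin.cons b w : Fin (n+1) → Bool) ∈ S) with hSbdef
    have hSb : ∀ b, Sb b = Finset.univ.filter (fun w => (Fin.cons b w : Fin (n+1) → Bool) ∈ S) :=
      fun b => rfl
    have hcard : S.card = (Sb false).card + (Sb true).card := by
      have h1 : S.card = ∑ x : Fin (n+1) → Bool, if x ∈ S then 1 else 0 := by
        rw [← Finset.card_filter, Finset.filter_univ_mem]
      rw [h1, ← Equiv.sum_comp (consEq n) (fun x => if x ∈ S then (1:ℕ) else 0),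
        Fintype.sum_prod_type, Fintype.sum_bool]
      simp only [hSb, Finset.card_filter, consEq_apply]
      try rw [Nat.add_comm]
      try rfl
    have hb : ∀ b, (Sb b).card ≤ 2 ^ n := by
      intro b
      calc (Sb b).card ≤ Finset.univ.card := Finset.card_filter_le _ _
        _ = 2 ^ n := by simp [Finset.card_univ]
    have hmin : ((Sb false) ∩ (Sb true)).card ≤ min (Sb false).card (Sb true).card :=
      le_min (Finset.card_le_card Finset.inter_subset_left)
        (Finset.card_le_card Finset.inter_subset_right)
    calc Pcnt S = Pcnt (Sb false) + Pcnt (Sb true) + 2 * ((Sb false) ∩ (Sb true)).card :=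
          hsplit S Sb hSb
      _ ≤ Gt n (Sb false).card + Gt n (Sb true).card + 2 * min (Sb false).card (Sb true).card := by
          gcongr
          · exact ih (by omega) _
          · exact ih (by omega) _
      _ ≤ Gt (n+1) ((Sb false).card + (Sb true).card) :=
          Gt_step n (by omega) _ (hb false) _ (hb true)
      _ = Gt (n+1) S.card := by rw [hcard]

lemma Gt24 : Gt 6 24 = 104 := by decide
lemma Gt40 : Gt 6 40 = 200 := by decide

-- ===================== boundary lower bound for 24-sets =====================

lemma degQ : ∀ u : Fin 6 → Bool, (∑ v, if (Q 6).Adj u v then (1:ℕ) else 0) = 6 := by decide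

lemma part (χ : (Fin 6 → Bool) → Bool) :
    6 * (Finset.univ.filter fun u => χ u = true).card
      ≤ (∑ u ∈ Finset.univ.filter (fun u => χ u = true),
          ∑ v, if (Q 6).Adj u v then (if χ u = χ v then 0 else 1) else 0)
        + Gt 6 (Finset.univ.filter fun u => χ u = true).card := by
  classical
  set S := Finset.univ.filter (fun u => χ u = true) with hS
  have memS : ∀ u, u ∈ S ↔ χ u = true := by intro u; rw [hS]; simp
  have split_u : ∀ u, (∑ v, if (Q 6).Adj u v then (if χ u = χ v then 0 else 1) else 0)
      + (∑ v, if (Q 6).Adj u v then (if χ u = χ v then 1 else 0) else 0) = 6 := by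
    intro u
    rw [← Finset.sum_add_distrib]
    conv_rhs => rw [← degQ u]
    refine Finset.sum_congr rfl fun v _ => ?_
    split_ifs <;> rfl
  have hN : (∑ u ∈ S, ∑ v, if (Q 6).Adj u v then (if χ u = χ v then 1 else 0) else 0)
      = Pcnt S := by
    rw [Pcnt]
    refine Finset.sum_congr rfl fun u hu => ?_
    rw [unsum S (fun v => if hammingDist u v = 1 then 1 else 0)]
    refine Finset.sum_congr rfl fun v _ => ?_
    have hu' : χ u = true := (memS u).1 hu
    by_cases hv : χ v = true
    · simp only [memS, hu', hv, if_pos rfl, if_true]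
      exact if_congr Iff.rfl rfl rfl
    · have h2 : ¬(χ u = χ v) := by rw [hu']; exact fun h => hv h.symm
      simp [memS, hu', hv, h2]
  have hsum6 : (∑ u ∈ S, ((∑ v, if (Q 6).Adj u v then (if χ u = χ v then 0 else 1) else 0)
      + (∑ v, if (Q 6).Adj u v then (if χ u = χ v then 1 else 0) else 0))) = 6 * S.card := by
    rw [Finset.sum_congr rfl fun u _ => split_u u, Finset.sum_const, smul_eq_mul, Nat.mul_comm]
  rw [Finset.sum_add_distrib, hN] at hsum6
  have hle := isop 6 le_rfl S
  omega

lemma cutlower (χ : (Fin 6 → Bool) → Bool)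
    (hc : (Finset.univ.filter fun u => χ u = true).card = 24) :
    80 ≤ ∑ u, ∑ v, if (Q 6).Adj u v then (if χ u = χ v then 0 else 1) else 0 := by
  classical
  have hsplit := Finset.sum_filter_add_sum_filter_not Finset.univ (fun u => χ u = true)
      (fun u => ∑ v, if (Q 6).Adj u v then (if χ u = χ v then 0 else 1) else 0)
  have h64 : (Finset.univ : Finset (Fin 6 → Bool)).card = 64 := by
    rw [Finset.card_univ]
    simp [Fintype.card_fun]
  have hcc := Finset.card_filter_add_card_filter_not
      (s := (Finset.univ : Finset (Fin 6 → Bool))) (p := fun u => χ u = true)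
  have hcount : (Finset.univ.filter fun u => ¬ (χ u = true)).card = 40 := by omega
  have hnotfilter : (Finset.univ.filter fun u => (!χ u) = true)
      = (Finset.univ.filter fun u => ¬ (χ u = true)) := by
    refine Finset.filter_congr fun u _ => ?_
    simp
  have h2 := part (fun u => !χ u)
  rw [hnotfilter, hcount] at h2
  have h1 := part χ
  rw [hc] at h1
  have hinner : ∀ u v : Fin 6 → Bool,
      (if (Q 6).Adj u v then (if (!χ u) = (!χ v) then 0 else 1) else 0)
      = (if (Q 6).Adj u v then (if χ u = χ v then 0 else 1) else 0) := by
    intro u v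
    have hb : ((!χ u) = (!χ v)) = (χ u = χ v) := by
      cases hχu : χ u <;> cases hχv : χ v <;> simp
    simp only [hb]
  simp only [hinner] at h2
  rw [Gt40] at h2
  rw [Gt24] at h1
  omega

-- ===================== cuts on the torus =====================

def cut (s : Fin 16) (p : Fin 8 × Fin 8) : Bool :=
  if h : s.val < 8 then (p.1 - ⟨s.val, h⟩).val < 3 else (p.2 - ⟨s.val - 8, by omega⟩).val < 3

lemma cut_cross_two : ∀ p q : Fin 8 × Fin 8, Ht.Adj p q →
    (∑ s : Fin 16, if cut s p = cut s q then 0 else 1) = 2 := by decide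

lemma cut_card : ∀ s : Fin 16,
    (∑ p : Fin 8 × Fin 8, if cut s p then 1 else 0) = 24 := by decide

def cross {β : Type*} {H : SimpleGraph β} (χ : β → Bool) : {p q : β} → H.Walk p q → ℕ
  | _, _, SimpleGraph.Walk.nil => 0
  | p, _, SimpleGraph.Walk.cons (v := r) _ w => (if χ p = χ r then 0 else 1) + cross χ w

lemma cross_ge {β : Type*} {H : SimpleGraph β} (χ : β → Bool) {p q : β} (w : H.Walk p q)
    (h : χ p ≠ χ q) : 1 ≤ cross χ w := by
  induction w with
  | nil => exact absurd rfl h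
  | @cons p r q h' w ih =>
    by_cases hc : χ p = χ r
    · have : χ r ≠ χ q := by rw [← hc]; exact h
      simpa [cross, hc] using ih this
    · simp [cross, hc]

lemma cross_sum {p q : Fin 8 × Fin 8} (w : Ht.Walk p q) :
    (∑ s : Fin 16, cross (cut s) w) = 2 * w.length := by
  induction w with
  | nil => simp [cross]
  | @cons p r q h' w ih =>
    have : ∀ s : Fin 16, cross (cut s) (SimpleGraph.Walk.cons h' w)
        = (if cut s p = cut s r then 0 else 1) + cross (cut s) w := fun s => rfl
    rw [Finset.sum_congr rfl fun s _ => this s, Finset.sum_add_distrib,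
      cut_cross_two p r h', ih]
    simp [SimpleGraph.Walk.length_cons]
    ring

lemma walk_bound {p q : Fin 8 × Fin 8} (w : Ht.Walk p q) :
    (∑ s : Fin 16, if cut s p = cut s q then 0 else 1) ≤ 2 * w.length := by
  rw [← cross_sum w]
  refine Finset.sum_le_sum fun s _ => ?_
  by_cases hc : cut s p = cut s q
  · simp [hc]
  · simpa [hc] using cross_ge (cut s) w hc

-- ===================== the lower bound =====================

theorem lower (f : Embed (Q 6) Ht) : 320 ≤ wirelength f := by
  classical
  set π := f.toEquiv with hπ
  have hcard : ∀ s : Fin 16, (Finset.univ.filter fun u => cut s (π u) = true).card = 24 := by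
    intro s
    rw [Finset.card_filter,
      show (∑ u, if cut s (π u) = true then (1:ℕ) else 0)
        = ∑ p, if cut s p = true then (1:ℕ) else 0 from
        Equiv.sum_comp π (fun p => if cut s p = true then (1:ℕ) else 0)]
    exact cut_card s
  have key : ∀ s : Fin 16, 80 ≤ ∑ u, ∑ v, if (Q 6).Adj u v then
      (if cut s (π u) = cut s (π v) then 0 else 1) else 0 :=
    fun s => cutlower (fun u => cut s (π u)) (hcard s)
  have step1 : ∀ u v : Fin 6 → Bool,
      (∑ s : Fin 16, if (Q 6).Adj u v then (if cut s (π u) = cut s (π v) then 0 else 1) else 0)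
      = (if (Q 6).Adj u v then (∑ s : Fin 16, if cut s (π u) = cut s (π v) then 0 else 1) else 0) := by
    intro u v
    by_cases h : (Q 6).Adj u v
    · simp [h]
    · simp [h]
  have step2 : ∀ u v : Fin 6 → Bool,
      (if (Q 6).Adj u v then (∑ s : Fin 16, if cut s (π u) = cut s (π v) then 0 else 1) else 0)
      ≤ (if (Q 6).Adj u v then 2 * pathLen f (Sym2.mk u v) else 0) := by
    intro u v
    by_cases h : (Q 6).Adj u v
    · rw [if_pos h, if_pos h, pathLen_eq f h]
      exact walk_bound (f.path u v h)
    · rw [if_neg h, if_neg h]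
  have chain : (1280:ℕ) ≤ ∑ u, ∑ v, (if (Q 6).Adj u v then 2 * pathLen f (Sym2.mk u v) else 0) := by
    calc (1280:ℕ) = ∑ _s : Fin 16, (80:ℕ) := by simp
      _ ≤ ∑ s : Fin 16, ∑ u, ∑ v, (if (Q 6).Adj u v then
            (if cut s (π u) = cut s (π v) then 0 else 1) else 0) :=
          Finset.sum_le_sum fun s _ => key s
      _ = ∑ u, ∑ s : Fin 16, ∑ v, (if (Q 6).Adj u v then
            (if cut s (π u) = cut s (π v) then 0 else 1) else 0) := Finset.sum_comm
      _ = ∑ u, ∑ v, ∑ s : Fin 16, (if (Q 6).Adj u v then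
            (if cut s (π u) = cut s (π v) then 0 else 1) else 0) :=
          Finset.sum_congr rfl fun u _ => Finset.sum_comm
      _ = ∑ u, ∑ v, (if (Q 6).Adj u v then
            (∑ s : Fin 16, if cut s (π u) = cut s (π v) then 0 else 1) else 0) :=
          Finset.sum_congr rfl fun u _ => Finset.sum_congr rfl fun v _ => step1 u v
      _ ≤ ∑ u, ∑ v, (if (Q 6).Adj u v then 2 * pathLen f (Sym2.mk u v) else 0) :=
          Finset.sum_le_sum fun u _ => Finset.sum_le_sum fun v _ => step2 u v
  have hdouble : (∑ u, ∑ v, (if (Q 6).Adj u v then 2 * pathLen f (Sym2.mk u v) else 0))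
      = 2 * ∑ u, ∑ v, (if (Q 6).Adj u v then pathLen f (Sym2.mk u v) else 0) := by
    rw [Finset.mul_sum]
    refine Finset.sum_congr rfl fun u _ => ?_
    rw [Finset.mul_sum]
    refine Finset.sum_congr rfl fun v _ => ?_
    by_cases h : (Q 6).Adj u v <;> simp [h]
  have hp := pair_sum (Q 6) (pathLen f)
  rw [hdouble, hp] at chain
  rw [wirelength_eq_sum f]
  omega

-- ===================== the upper bound construction =====================

lemma cyc_adj_succ : ∀ a : Fin 8, (cycleGraph 8).Adj a (a + 1) := by decide
lemma cyc_adj_pred : ∀ a : Fin 8, (cycleGraph 8).Adj a (a - 1) := by decide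

open Fin.NatCast in
def cwP : (a : Fin 8) → (k : ℕ) → (cycleGraph 8).Walk a (a + (k : Fin 8))
  | _, 0 => SimpleGraph.Walk.nil.copy rfl (by simp)
  | a, (k+1) => ((cwP (a+1) k).cons (cyc_adj_succ a)).copy rfl (by push_cast; abel)

open Fin.NatCast in
def cwN : (a : Fin 8) → (k : ℕ) → (cycleGraph 8).Walk a (a - (k : Fin 8))
  | _, 0 => SimpleGraph.Walk.nil.copy rfl (by simp)
  | a, (k+1) => ((cwN (a-1) k).cons (cyc_adj_pred a)).copy rfl (by push_cast; abel)

@[simp] lemma cwP_length (a : Fin 8) (k : ℕ) : (cwP a k).length = k := by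
  induction k generalizing a with
  | zero => simp [cwP]
  | succ k ih => simp [cwP, ih]

@[simp] lemma cwN_length (a : Fin 8) (k : ℕ) : (cwN a k).length = k := by
  induction k generalizing a with
  | zero => simp [cwN]
  | succ k ih => simp [cwN, ih]

def dlen (a b : Fin 8) : ℕ := if (b - a).val ≤ 4 then (b - a).val else (a - b).val

open Fin.NatCast in
def hwalk (a b : Fin 8) : (cycleGraph 8).Walk a b :=
  if h : (b - a).val ≤ 4 then (cwP a (b - a).val).copy rfl (by simp [Fin.cast_val_eq_self])
  else (cwN a (a - b).val).copy rfl (by simp [Fin.cast_val_eq_self])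

@[simp] lemma hwalk_length (a b : Fin 8) : (hwalk a b).length = dlen a b := by
  unfold hwalk dlen; split <;> simp

lemma hwalk_nodup : ∀ a b : Fin 8, (hwalk a b).support.Nodup := by decide

lemma hwalk_isPath (a b : Fin 8) : (hwalk a b).IsPath :=
  (SimpleGraph.Walk.isPath_def _).2 (hwalk_nodup a b)

def gpos (a b c : Bool) : Fin 8 :=
  match a, b, c with
  | false, false, false => 0
  | true,  false, false => 1
  | true,  true,  false => 2
  | false, true,  false => 3
  | false, true,  true  => 4
  | true,  true,  true  => 5
  | true,  false, true  => 6
  | false, false, true  => 7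

def gbit (k : ℕ) (x : Fin 8) : Bool :=
  match k, x with
  | 0, x => x.val ∈ [1,2,5,6]
  | 1, x => x.val ∈ [2,3,4,5]
  | _, x => x.val ∈ [4,5,6,7]

def ge : (Fin 6 → Bool) ≃ (Fin 8 × Fin 8) where
  toFun u := (gpos (u 0) (u 1) (u 2), gpos (u 3) (u 4) (u 5))
  invFun p := fun i => if i.val < 3 then gbit i.val p.1 else gbit (i.val - 3) p.2
  left_inv := by decide
  right_inv := by decide

def myL (u v : Fin 6 → Bool) : ℕ :=
  if (ge v).2 = (ge u).2 then dlen (ge u).1 (ge v).1 else dlen (ge u).2 (ge v).2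

theorem coord_fact : ∀ u v : Fin 6 → Bool, hammingDist u v = 1 →
    (ge v).1 = (ge u).1 ∨ (ge v).2 = (ge u).2 := by decide

theorem myL_sum :
    (∑ u : Fin 6 → Bool, ∑ v : Fin 6 → Bool, if hammingDist u v = 1 then myL u v else 0) = 640 := by
  decide

def key (u : Fin 6 → Bool) : ℕ := ((ge u).1).val * 8 + ((ge u).2).val

lemma key_inj : ∀ u v : Fin 6 → Bool, key u = key v → u = v := by decide

def build (u v : Fin 6 → Bool) (h : (Q 6).Adj u v) : Ht.Walk (ge u) (ge v) :=
  if h2 : (ge v).2 = (ge u).2 then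
    ((hwalk (ge u).1 (ge v).1).boxProdLeft (cycleGraph 8) (ge u).2).copy rfl (by rw [← h2])
  else if h1 : (ge v).1 = (ge u).1 then
    ((hwalk (ge u).2 (ge v).2).boxProdRight (cycleGraph 8) (ge u).1).copy rfl (by rw [← h1])
  else absurd (coord_fact u v h) (by tauto)

lemma build_isPath (u v : Fin 6 → Bool) (h : (Q 6).Adj u v) : (build u v h).IsPath := by
  unfold build
  split
  · rw [SimpleGraph.Walk.isPath_copy]
    exact SimpleGraph.Walk.map_isPath_of_injective
      (((cycleGraph 8).boxProdLeft (cycleGraph 8) _).injective) (hwalk_isPath _ _)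
  split
  · rw [SimpleGraph.Walk.isPath_copy]
    exact SimpleGraph.Walk.map_isPath_of_injective
      (((cycleGraph 8).boxProdRight (cycleGraph 8) _).injective) (hwalk_isPath _ _)
  · exact absurd (coord_fact u v h) (by tauto)

lemma build_length (u v : Fin 6 → Bool) (h : (Q 6).Adj u v) :
    (build u v h).length = myL u v := by
  unfold build myL
  split
  · rename_i h2
    rw [SimpleGraph.Walk.length_copy]
    show ((hwalk (ge u).1 (ge v).1).map _).length = _
    rw [SimpleGraph.Walk.length_map, hwalk_length]
  split
  · rename_i h2 h1
    rw [SimpleGraph.Walk.length_copy]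
    show ((hwalk (ge u).2 (ge v).2).map _).length = _
    rw [SimpleGraph.Walk.length_map, hwalk_length]
  · exact absurd (coord_fact u v h) (by tauto)

lemma myL_symm : ∀ u v : Fin 6 → Bool, hammingDist u v = 1 → myL v u = myL u v := by decide

def f0 : Embed (Q 6) Ht where
  toEquiv := ge
  path u v h := if key u ≤ key v then build u v h else (build v u h.symm).reverse
  isPath u v h := by
    beta_reduce
    split
    · exact build_isPath u v h
    · exact (build_isPath v u h.symm).reverse
  symmPath u v h := by
    have hne : u ≠ v := h.ne
    have hk : key u ≠ key v := fun hk => hne (key_inj u v hk)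
    beta_reduce
    by_cases hle : key u ≤ key v
    · have h2 : ¬ (key v ≤ key u) := fun h2 => hk (Nat.le_antisymm hle h2)
      rw [if_pos hle, if_neg h2]
    · have hvu : key v ≤ key u := Nat.le_of_not_le hle
      rw [if_neg hle, if_pos hvu, SimpleGraph.Walk.reverse_reverse]

lemma f0_path_length : ∀ u v (h : (Q 6).Adj u v), (f0.path u v h).length = myL u v := by
  intro u v h
  show (if key u ≤ key v then build u v h else (build v u h.symm).reverse).length = myL u v
  split
  · exact build_length u v h
  · rw [SimpleGraph.Walk.length_reverse, build_length v u h.symm, myL_symm u v h]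

theorem upper : wirelength f0 = 320 := by
  classical
  have hp := pair_sum (Q 6) (pathLen f0)
  have hsum : (∑ u, ∑ v, if (Q 6).Adj u v then pathLen f0 (Sym2.mk u v) else 0) = 640 := by
    rw [show (∑ u, ∑ v, if (Q 6).Adj u v then pathLen f0 (Sym2.mk u v) else 0)
        = ∑ u, ∑ v, if hammingDist u v = 1 then myL u v else 0 from
      Finset.sum_congr rfl fun u _ => Finset.sum_congr rfl fun v _ => by
        by_cases h : (Q 6).Adj u v
        · rw [if_pos h, pathLen_eq f0 h, f0_path_length u v h]
          exact (if_pos h).symm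
        · rw [if_neg h]
          exact (if_neg h).symm]
    exact myL_sum
  rw [hsum] at hp
  rw [wirelength_eq_sum f0]
  omega

/-- The minimum wirelength of embedding the hypercube `Q^6` into the torus
`C_8 × C_8` is `320`. -/
theorem hypercube_torus_wirelength :
    minWL (Q 6) ((cycleGraph 8).boxProd (cycleGraph 8)) = 320 := by
  have hmem : 320 ∈ {n | ∃ f : Embed (Q 6) ((cycleGraph 8).boxProd (cycleGraph 8)),
      wirelength f = n} := ⟨f0, upper⟩
  refine le_antisymm (Nat.sInf_le hmem) ?_
  refine le_csInf ⟨320, hmem⟩ ?_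
  rintro n ⟨f, rfl⟩
  exact lower f
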